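/- With D_p(k_1,...,k_s) the colength of (∑x_i, x_1^{k_1},...,x_s^{k_s}) in (ℤ/p)[x_1,...,x_s]: if u_1,...,u_s are all < p, then D_p(u_1+1, ..., u_s+1) - D_p(u_1,...,u_s) ≤ s·p^{s-2}. -/

import Mathlib

open MvPolynomial

/-- `D_p(k_1,…,k_s)`: the `ℤ/p`-dimension (length) of
`(ℤ/p)[x_1,…,x_s]/(∑ xᵢ, x_1^{k_1},…,x_s^{k_s})`. -/
noncomputable def Dlen (p s : ℕ) (k : Fin s → ℕ) : ℕ :=
  Module.finrank (ZMod p)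
    (MvPolynomial (Fin s) (ZMod p) ⧸
      Ideal.span ({∑ i, (X i : MvPolynomial (Fin s) (ZMod p))} ∪
        Set.range fun i : Fin s => (X i : MvPolynomial (Fin s) (ZMod p)) ^ k i))

namespace DlenAux

open Module Submodule

variable {K : Type*} [Field K]

/-- The ideal appearing in `Dlen`. -/
noncomputable def genIdeal (K : Type*) [CommRing K] (s : ℕ) (k : Fin s → ℕ) :
    Ideal (MvPolynomial (Fin s) K) :=
  Ideal.span ({∑ i, X i} ∪ Set.range fun i : Fin s => (X i : MvPolynomial (Fin s) K) ^ k i)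

lemma sum_mem_genIdeal (s : ℕ) (m : Fin s → ℕ) :
    (∑ i, X i : MvPolynomial (Fin s) K) ∈ genIdeal K s m :=
  Ideal.subset_span (Or.inl rfl)

lemma pow_mem_genIdeal (s : ℕ) (m : Fin s → ℕ) (i : Fin s) :
    (X i : MvPolynomial (Fin s) K) ^ m i ∈ genIdeal K s m :=
  Ideal.subset_span (Or.inr ⟨i, rfl⟩)

lemma pow_p_mem_genIdeal {s p : ℕ} {m : Fin s → ℕ} (hm : ∀ i, m i ≤ p) (i : Fin s) :
    (X i : MvPolynomial (Fin s) K) ^ p ∈ genIdeal K s m := by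
  have h1 : (X i : MvPolynomial (Fin s) K) ^ p = X i ^ (p - m i) * X i ^ m i := by
    rw [← pow_add, Nat.sub_add_cancel (hm i)]
  rw [h1]
  exact Ideal.mul_mem_left _ _ (pow_mem_genIdeal s m i)

/-- A monomial divisible by `X j ^ m` with `X j ^ m ∈ J` lies in `J`. -/
lemma monomial_mem_of_le {s : ℕ} {J : Ideal (MvPolynomial (Fin s) K)} {j : Fin s} {m : ℕ}
    (h : (X j : MvPolynomial (Fin s) K) ^ m ∈ J) {a : Fin s →₀ ℕ} (ha : m ≤ a j) (c : K) :
    (monomial a c : MvPolynomial (Fin s) K) ∈ J := by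
  have key : (monomial a c : MvPolynomial (Fin s) K)
      = monomial (a.erase j) c * X j ^ (a j - m) * X j ^ m := by
    rw [mul_assoc, ← pow_add, Nat.sub_add_cancel ha, X_pow_eq_monomial, monomial_mul,
      mul_one, Finsupp.erase_add_single]
  rw [key]
  exact Ideal.mul_mem_left _ _ h

lemma top_le_of_monomials {s : ℕ} (W : Submodule K (MvPolynomial (Fin s) K))
    (h : ∀ a : Fin s →₀ ℕ, (monomial a 1 : MvPolynomial (Fin s) K) ∈ W) : ⊤ ≤ W := by
  intro f _
  rw [f.as_sum]
  refine Submodule.sum_mem _ fun v _ => ?_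
  have : (monomial v (coeff v f) : MvPolynomial (Fin s) K) = coeff v f • monomial v 1 := by
    rw [smul_monomial, smul_eq_mul, mul_one]
  rw [this]
  exact Submodule.smul_mem _ _ (h v)

/-- Abstract reduction: every monomial lies in a submodule that contains `J`
and all "reduced" monomials. -/
lemma monomial_mem_W {s p : ℕ} {J : Ideal (MvPolynomial (Fin s) K)}
    (t i1 : Fin s)
    (hXt : (X t : MvPolynomial (Fin s) K) ∈ J)
    (hsum : (∑ i, X i : MvPolynomial (Fin s) K) ∈ J)
    (hpow : ∀ i, (X i : MvPolynomial (Fin s) K) ^ p ∈ J)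
    (W : Submodule K (MvPolynomial (Fin s) K))
    (hJW : ∀ x ∈ J, x ∈ W)
    (hbase : ∀ a : Fin s →₀ ℕ, a t = 0 → a i1 = 0 → (∀ i, a i < p) →
      (monomial a 1 : MvPolynomial (Fin s) K) ∈ W) :
    ∀ a : Fin s →₀ ℕ, (monomial a 1 : MvPolynomial (Fin s) K) ∈ W := by
  have base : ∀ a : Fin s →₀ ℕ, a i1 = 0 → (monomial a 1 : MvPolynomial (Fin s) K) ∈ W := by
    intro a hai
    by_cases hat : a t = 0
    · by_cases hlt : ∀ i, a i < p
      · exact hbase a hat hai hlt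
      · push_neg at hlt
        obtain ⟨j, hj⟩ := hlt
        exact hJW _ (monomial_mem_of_le (hpow j) hj 1)
    · have h1 : (X t : MvPolynomial (Fin s) K) ^ 1 ∈ J := by rwa [pow_one]
      exact hJW _ (monomial_mem_of_le h1 (Nat.one_le_iff_ne_zero.2 hat) 1)
  have main : ∀ (n : ℕ) (a : Fin s →₀ ℕ), a i1 ≤ n →
      (monomial a 1 : MvPolynomial (Fin s) K) ∈ W := by
    intro n
    induction n with
    | zero => exact fun a ha => base a (Nat.le_zero.mp ha)
    | succ n ih =>
      intro a ha
      by_cases h1 : a i1 = 0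
      · exact base a h1
      · set a' := a - Finsupp.single i1 1 with ha'def
        have hle : Finsupp.single i1 1 ≤ a := Finsupp.single_le_iff.2 (Nat.one_le_iff_ne_zero.2 h1)
        have ha' : a' + Finsupp.single i1 1 = a := tsub_add_cancel_of_le hle
        have hmul : ∀ i : Fin s,
            (monomial a' (1 : K)) * X i = monomial (a' + Finsupp.single i 1) 1 := by
          intro i
          rw [X, monomial_mul, mul_one]
        have key : (monomial a 1 : MvPolynomial (Fin s) K)
            = monomial a' 1 * (∑ i, X i)
              - ∑ i ∈ Finset.univ.erase i1, monomial (a' + Finsupp.single i 1) 1 := by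
          rw [Finset.mul_sum]
          simp_rw [hmul]
          rw [← Finset.sum_erase_add _ _ (Finset.mem_univ i1), ha']
          abel
        rw [key]
        refine Submodule.sub_mem _ (hJW _ (Ideal.mul_mem_left _ _ hsum))
          (Submodule.sum_mem _ fun i hi => ?_)
        apply ih
        have hii1 : i ≠ i1 := Finset.ne_of_mem_erase hi
        have h3 : a' i1 = a i1 - 1 := by
          rw [ha'def, Finsupp.tsub_apply, Finsupp.single_eq_same]
        have h4 : (Finsupp.single i 1 : Fin s →₀ ℕ) i1 = 0 := Finsupp.single_eq_of_ne' hii1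
        rw [Finsupp.add_apply, h3, h4]
        omega
  exact fun a => main (a i1) a le_rfl

/-- Spanning lemma for finite-dimensionality. -/
lemma span_all {s p : ℕ} {J : Ideal (MvPolynomial (Fin s) K)}
    (hpow : ∀ i, (X i : MvPolynomial (Fin s) K) ^ p ∈ J) :
    Submodule.span K (Set.range fun b : Fin s → Fin p =>
        (monomial (Finsupp.equivFunOnFinite.symm fun i => (b i : ℕ)) 1 :
          MvPolynomial (Fin s) K)) ⊔ J.restrictScalars K = ⊤ := by
  refine top_unique (top_le_of_monomials _ fun a => ?_)
  by_cases hlt : ∀ i, a i < p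
  · refine Submodule.mem_sup_left (Submodule.subset_span ⟨fun i => ⟨a i, hlt i⟩, ?_⟩)
    show (monomial (Finsupp.equivFunOnFinite.symm fun i : Fin s =>
        ((⟨a i, hlt i⟩ : Fin p) : ℕ)) 1 : MvPolynomial (Fin s) K) = monomial a 1
    have : (Finsupp.equivFunOnFinite.symm fun i : Fin s => ((⟨a i, hlt i⟩ : Fin p) : ℕ)) = a :=
      Finsupp.ext fun i => rfl
    rw [this]
  · push_neg at hlt
    obtain ⟨j, hj⟩ := hlt
    exact Submodule.mem_sup_right (monomial_mem_of_le (hpow j) hj 1)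

/-- Spanning lemma with two eliminated variables. -/
lemma span_two {s p : ℕ} {J : Ideal (MvPolynomial (Fin s) K)}
    {t i1 : Fin s} (hti : t ≠ i1)
    (hXt : (X t : MvPolynomial (Fin s) K) ∈ J)
    (hsum : (∑ i, X i : MvPolynomial (Fin s) K) ∈ J)
    (hpow : ∀ i, (X i : MvPolynomial (Fin s) K) ^ p ∈ J) :
    Submodule.span K (Set.range fun b : {j : Fin s // j ≠ t ∧ j ≠ i1} → Fin p =>
        (monomial (Finsupp.equivFunOnFinite.symm fun i =>
            if h : i ≠ t ∧ i ≠ i1 then (b ⟨i, h⟩ : ℕ) else 0) 1 :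
          MvPolynomial (Fin s) K)) ⊔ J.restrictScalars K = ⊤ := by
  refine top_unique (top_le_of_monomials _ (monomial_mem_W t i1 hXt hsum hpow _
    (fun x hx => Submodule.mem_sup_right hx) ?_))
  intro a hat hai hlt
  refine Submodule.mem_sup_left (Submodule.subset_span ⟨fun j => ⟨a j.1, hlt j.1⟩, ?_⟩)
  show (monomial (Finsupp.equivFunOnFinite.symm fun i : Fin s =>
      if h : i ≠ t ∧ i ≠ i1 then
        (((fun j : {j : Fin s // j ≠ t ∧ j ≠ i1} => (⟨a j.1, hlt j.1⟩ : Fin p)) ⟨i, h⟩ : Fin p) : ℕ)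
      else 0) 1 : MvPolynomial (Fin s) K) = monomial a 1
  have heq : (Finsupp.equivFunOnFinite.symm fun i : Fin s =>
      if h : i ≠ t ∧ i ≠ i1 then
        (((fun j : {j : Fin s // j ≠ t ∧ j ≠ i1} => (⟨a j.1, hlt j.1⟩ : Fin p)) ⟨i, h⟩ : Fin p) : ℕ)
      else 0) = a := by
    refine Finsupp.ext fun i => ?_
    show (if h : i ≠ t ∧ i ≠ i1 then a i else 0) = a i
    by_cases h : i ≠ t ∧ i ≠ i1
    · rw [dif_pos h]
    · rw [dif_neg h]
      push_neg at h
      by_cases h' : i = t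
      · rw [h', hat]
      · rw [h h', hai]
  rw [heq]

/-- Push a spanning statement to the quotient. -/
lemma quot_span_top {A : Type*} [CommRing A] [Algebra K A] (J : Ideal A) {ι : Type*} (g : ι → A)
    (h : Submodule.span K (Set.range g) ⊔ J.restrictScalars K = ⊤) :
    Submodule.span K (Set.range fun i => Ideal.Quotient.mkₐ K J (g i)) = ⊤ := by
  set π := (Ideal.Quotient.mkₐ K J).toLinearMap with hπdef
  have hsurj : Function.Surjective π := Ideal.Quotient.mkₐ_surjective K J
  have htop : Submodule.map π ⊤ = ⊤ := by
    rw [Submodule.map_top, LinearMap.range_eq_top]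
    exact hsurj
  rw [← h, Submodule.map_sup, Submodule.map_span] at htop
  have h0 : Submodule.map π (J.restrictScalars K) = ⊥ := by
    rw [Submodule.eq_bot_iff]
    rintro x ⟨y, hy, rfl⟩
    exact Ideal.Quotient.eq_zero_iff_mem.2 hy
  rw [h0, sup_bot_eq, ← Set.range_comp] at htop
  exact htop

lemma findim_of_span {M : Type*} [AddCommGroup M] [Module K M] {ι : Type*} [Fintype ι]
    (g : ι → M) (h : Submodule.span K (Set.range g) = ⊤) :
    Module.Finite K M ∧ Module.finrank K M ≤ Fintype.card ι := by
  constructor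
  · exact Module.finite_def.2 (h ▸ Submodule.fg_span (Set.finite_range g))
  · have h2 := finrank_range_le_card (R := K) g
    rwa [Set.finrank, h, finrank_top] at h2

/-- Finite-dimensionality of the quotient when `X i ^ p ∈ J` for all `i`. -/
lemma quot_findim {s p : ℕ} (J : Ideal (MvPolynomial (Fin s) K))
    (hpow : ∀ i, (X i : MvPolynomial (Fin s) K) ^ p ∈ J) :
    Module.Finite K (MvPolynomial (Fin s) K ⧸ J) :=
  (findim_of_span _ (quot_span_top J _ (span_all hpow))).1

/-- Dimension bound for the quotient when additionally `X t` and `∑ X i` lie in `J`. -/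
lemma quot_dim_le {s p : ℕ} (hs : 2 ≤ s) (J : Ideal (MvPolynomial (Fin s) K))
    (t : Fin s) (hXt : (X t : MvPolynomial (Fin s) K) ∈ J)
    (hsum : (∑ i, X i : MvPolynomial (Fin s) K) ∈ J)
    (hpow : ∀ i, (X i : MvPolynomial (Fin s) K) ^ p ∈ J) :
    Module.finrank K (MvPolynomial (Fin s) K ⧸ J) ≤ p ^ (s - 2) := by
  obtain ⟨i1, hi1⟩ : ∃ i1 : Fin s, i1 ≠ t := by
    apply Fintype.exists_ne_of_one_lt_card
    simpa using Nat.lt_of_succ_le hs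
  have hti : t ≠ i1 := hi1.symm
  have hspan := span_two hti hXt hsum hpow
  have hle := (findim_of_span _ (quot_span_top J _ hspan)).2
  refine hle.trans ?_
  rw [Fintype.card_fun, Fintype.card_fin]
  have hcard : Fintype.card {j : Fin s // j ≠ t ∧ j ≠ i1} = s - 2 := by
    rw [Fintype.card_subtype]
    have heq : Finset.univ.filter (fun j : Fin s => j ≠ t ∧ j ≠ i1)
        = Finset.univ \ {t, i1} := by
      ext j
      simp [and_comm]
    rw [heq, Finset.card_sdiff_of_subset (Finset.subset_univ _)]
    have h2 : ({t, i1} : Finset (Fin s)).card = 2 := by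
      rw [Finset.card_insert_of_notMem (by simpa using hti), Finset.card_singleton]
    rw [h2, Finset.card_univ, Fintype.card_fin]
  rw [hcard]

set_option maxHeartbeats 1000000 in
/-- The core bump inequality, over an arbitrary field. -/
lemma bump_core (K : Type*) [Field K] {s p : ℕ} (hs : 2 ≤ s) (k : Fin s → ℕ)
    (hk : ∀ i, k i ≤ p) (t : Fin s) (ht : k t < p) :
    Module.finrank K (MvPolynomial (Fin s) K ⧸ genIdeal K s (Function.update k t (k t + 1)))
      ≤ Module.finrank K (MvPolynomial (Fin s) K ⧸ genIdeal K s k) + p ^ (s - 2) := by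
  set k' := Function.update k t (k t + 1) with hk'def
  have hk't : k' t = k t + 1 := Function.update_self t _ k
  have hk'ne : ∀ i, i ≠ t → k' i = k i := fun i hi => Function.update_of_ne hi _ k
  have hk' : ∀ i, k' i ≤ p := by
    intro i
    by_cases hi : i = t
    · subst hi; rw [hk't]; omega
    · rw [hk'ne i hi]; exact hk i
  set I : Ideal (MvPolynomial (Fin s) K) := genIdeal K s k with hI
  set I' : Ideal (MvPolynomial (Fin s) K) := genIdeal K s k' with hI'
  -- I ≤ I' ⊔ span {X t ^ k t}
  have hIsup : I ≤ I' ⊔ Ideal.span {(X t : MvPolynomial (Fin s) K) ^ k t} := by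
    rw [hI, genIdeal, Ideal.span_le]
    rintro x (hx | ⟨i, rfl⟩)
    · rw [Set.mem_singleton_iff] at hx; subst hx
      exact Submodule.mem_sup_left (sum_mem_genIdeal s k')
    · show (X i : MvPolynomial (Fin s) K) ^ k i ∈
        I' ⊔ Ideal.span {(X t : MvPolynomial (Fin s) K) ^ k t}
      by_cases hi : i = t
      · subst hi
        exact Submodule.mem_sup_right (Ideal.subset_span rfl)
      · refine Submodule.mem_sup_left ?_
        have h1 := pow_mem_genIdeal (K := K) s k' i
        rwa [hk'ne i hi] at h1
  set π := (Ideal.Quotient.mkₐ K I').toLinearMap with hπ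
  set N : Submodule K (MvPolynomial (Fin s) K ⧸ I') :=
    Submodule.map π ((I : Submodule _ _).restrictScalars K) with hN
  haveI finQ : Module.Finite K (MvPolynomial (Fin s) K ⧸ I') :=
    quot_findim I' (pow_p_mem_genIdeal hk')
  haveI finRI : Module.Finite K (MvPolynomial (Fin s) K ⧸ I) :=
    quot_findim I (pow_p_mem_genIdeal hk)
  haveI finRIrs : Module.Finite K
      (MvPolynomial (Fin s) K ⧸ (I : Submodule _ _).restrictScalars K) :=
    Module.Finite.equiv (Submodule.Quotient.restrictScalarsEquiv K (I : Submodule _ _)).symm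
  have hrn := Submodule.finrank_quotient_add_finrank N
  -- (A)
  have hA : finrank K ((MvPolynomial (Fin s) K ⧸ I') ⧸ N) ≤
      finrank K (MvPolynomial (Fin s) K ⧸ I) := by
    have hker : (I : Submodule _ _).restrictScalars K ≤ LinearMap.ker (N.mkQ ∘ₗ π) := by
      intro x hx
      have hm : π x ∈ N := Submodule.mem_map_of_mem hx
      show N.mkQ (π x) = 0
      rwa [Submodule.mkQ_apply, Submodule.Quotient.mk_eq_zero]
    have hfsurj : Function.Surjective (N.mkQ ∘ₗ π) :=
      (Submodule.mkQ_surjective N).comp (Ideal.Quotient.mkₐ_surjective K I')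
    have hf'surj : Function.Surjective
        (Submodule.liftQ ((I : Submodule _ _).restrictScalars K) (N.mkQ ∘ₗ π) hker) := by
      intro y
      obtain ⟨x, hx⟩ := hfsurj y
      exact ⟨Submodule.Quotient.mk x, by rwa [Submodule.liftQ_apply]⟩
    have h1 : finrank K ((MvPolynomial (Fin s) K ⧸ I') ⧸ N) ≤
        finrank K (MvPolynomial (Fin s) K ⧸ (I : Submodule _ _).restrictScalars K) := by
      have hr := LinearMap.range_eq_top.2 hf'surj
      have h2 := LinearMap.finrank_range_le
        (Submodule.liftQ ((I : Submodule _ _).restrictScalars K) (N.mkQ ∘ₗ π) hker)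
      rwa [hr, finrank_top] at h2
    refine h1.trans_eq ?_
    exact (Submodule.Quotient.restrictScalarsEquiv K (I : Submodule _ _)).finrank_eq
  -- (B)
  have hB : finrank K N ≤ p ^ (s - 2) := by
    set J2 : Ideal (MvPolynomial (Fin s) K) :=
      I' ⊔ Ideal.span {(X t : MvPolynomial (Fin s) K)} with hJ2
    have hJ2t : (X t : MvPolynomial (Fin s) K) ∈ J2 :=
      Submodule.mem_sup_right (Ideal.subset_span rfl)
    have hJ2sum : (∑ i, X i : MvPolynomial (Fin s) K) ∈ J2 :=
      Submodule.mem_sup_left (sum_mem_genIdeal s k')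
    have hJ2pow : ∀ i : Fin s, (X i : MvPolynomial (Fin s) K) ^ p ∈ J2 :=
      fun i => Submodule.mem_sup_left (pow_p_mem_genIdeal hk' i)
    haveI finJ2 : Module.Finite K (MvPolynomial (Fin s) K ⧸ J2) := quot_findim J2 hJ2pow
    haveI finJ2rs : Module.Finite K
        (MvPolynomial (Fin s) K ⧸ (J2 : Submodule _ _).restrictScalars K) :=
      Module.Finite.equiv (Submodule.Quotient.restrictScalarsEquiv K (J2 : Submodule _ _)).symm
    set φ : MvPolynomial (Fin s) K →ₗ[K] (MvPolynomial (Fin s) K ⧸ I') :=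
      π ∘ₗ LinearMap.mulLeft K ((X t : MvPolynomial (Fin s) K) ^ k t) with hφ
    have hφapp : ∀ x : MvPolynomial (Fin s) K,
        φ x = Ideal.Quotient.mk I' ((X t : MvPolynomial (Fin s) K) ^ k t * x) := fun x => rfl
    have hφker : (J2 : Submodule _ _).restrictScalars K ≤ LinearMap.ker φ := by
      intro x hx
      have hx' : x ∈ I' ⊔ Ideal.span {(X t : MvPolynomial (Fin s) K)} := hx
      obtain ⟨a, ha, b, hb, rfl⟩ := Submodule.mem_sup.1 hx'
      obtain ⟨c, rfl⟩ := Ideal.mem_span_singleton'.1 hb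
      have hmem : (X t : MvPolynomial (Fin s) K) ^ k t * (a + c * X t) ∈ I' := by
        have h1 : (X t : MvPolynomial (Fin s) K) ^ k t * a ∈ I' := Ideal.mul_mem_left _ _ ha
        have h2 : (X t : MvPolynomial (Fin s) K) ^ k t * (c * X t) ∈ I' := by
          have heq : (X t : MvPolynomial (Fin s) K) ^ k t * (c * X t)
              = c * X t ^ (k t + 1) := by ring
          rw [heq, ← hk't]
          exact Ideal.mul_mem_left _ _ (pow_mem_genIdeal s k' t)
        have h3 := Ideal.add_mem I' h1 h2
        rwa [← mul_add] at h3
      show φ (a + c * X t) = 0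
      rw [hφapp, Ideal.Quotient.eq_zero_iff_mem]
      exact hmem
    have hNle : N ≤ LinearMap.range (Submodule.liftQ _ φ hφker) := by
      rintro y ⟨x, hx, rfl⟩
      have hx' : x ∈ I' ⊔ Ideal.span {(X t : MvPolynomial (Fin s) K) ^ k t} := hIsup hx
      obtain ⟨a, ha, b, hb, rfl⟩ := Submodule.mem_sup.1 hx'
      obtain ⟨c, rfl⟩ := Ideal.mem_span_singleton'.1 hb
      refine ⟨Submodule.Quotient.mk c, ?_⟩
      rw [Submodule.liftQ_apply, hφapp]
      have hπa : (Ideal.Quotient.mk I') a = 0 := Ideal.Quotient.eq_zero_iff_mem.2 ha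
      show Ideal.Quotient.mk I' ((X t : MvPolynomial (Fin s) K) ^ k t * c)
        = Ideal.Quotient.mk I' (a + c * X t ^ k t)
      rw [Ideal.Quotient.eq]
      have hdiff : (X t : MvPolynomial (Fin s) K) ^ k t * c - (a + c * X t ^ k t) = -a := by
        ring
      rw [hdiff]
      exact I'.neg_mem ha
    have h1 : finrank K N ≤ finrank K (LinearMap.range (Submodule.liftQ _ φ hφker)) :=
      Submodule.finrank_mono hNle
    have h2 : finrank K (LinearMap.range (Submodule.liftQ
          ((J2 : Submodule _ _).restrictScalars K) φ hφker)) ≤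
        finrank K (MvPolynomial (Fin s) K ⧸ (J2 : Submodule _ _).restrictScalars K) :=
      LinearMap.finrank_range_le _
    have h4 : finrank K (MvPolynomial (Fin s) K ⧸ (J2 : Submodule _ _).restrictScalars K)
        = finrank K (MvPolynomial (Fin s) K ⧸ J2) :=
      (Submodule.Quotient.restrictScalarsEquiv K (J2 : Submodule _ _)).finrank_eq
    have h5 : finrank K (MvPolynomial (Fin s) K ⧸ J2) ≤ p ^ (s - 2) :=
      quot_dim_le hs J2 t hJ2t hJ2sum hJ2pow
    omega
  omega

end DlenAux

open DlenAux in
/-- The key bump lemma: increasing one exponent raises the dimension by at most `p^(s-2)`. -/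
lemma Dlen_bump (p : ℕ) (hp : p.Prime) (s : ℕ) (hs : 2 ≤ s) (k : Fin s → ℕ)
    (hk : ∀ i, k i ≤ p) (t : Fin s) (ht : k t < p) :
    Dlen p s (Function.update k t (k t + 1)) ≤ Dlen p s k + p ^ (s - 2) := by
  haveI : Fact p.Prime := ⟨hp⟩
  have h := bump_core (ZMod p) (p := p) hs k hk t ht
  unfold Dlen
  unfold genIdeal at h
  exact h

/-- If `u_1,…,u_s < p`, then `D_p(u_1+1,…,u_s+1) - D_p(u_1,…,u_s) ≤ s·p^{s-2}`. -/
theorem Dlen_increment (p : ℕ) (hp : p.Prime) (s : ℕ) (hs : 2 ≤ s)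
    (u : Fin s → ℕ) (hu : ∀ i, u i < p) :
    (Dlen p s (fun i => u i + 1) : ℤ) - Dlen p s u ≤ s * p ^ (s - 2) := by
  have key : ∀ m : ℕ, m ≤ s →
      Dlen p s (fun i => if (i : ℕ) < m then u i + 1 else u i) ≤
        Dlen p s u + m * p ^ (s - 2) := by
    intro m
    induction m with
    | zero => intro _; simp
    | succ m ih =>
      intro hm
      have hms : m < s := hm
      set t : Fin s := ⟨m, hms⟩ with htdef
      set kcur : Fin s → ℕ := fun i => if (i : ℕ) < m then u i + 1 else u i with hkcur
      have hkt : kcur t = u t := by simp [hkcur, htdef]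
      have hkcur_le : ∀ i, kcur i ≤ p := by
        intro i
        simp only [hkcur]
        split
        · exact hu i
        · exact (hu i).le
      have hktlt : kcur t < p := by rw [hkt]; exact hu t
      have step := Dlen_bump p hp s hs kcur hkcur_le t hktlt
      have hupd : Function.update kcur t (kcur t + 1) =
          fun i : Fin s => if (i : ℕ) < m + 1 then u i + 1 else u i := by
        funext i
        rw [Function.update_apply]
        by_cases hi : i = t
        · subst hi
          simp only [hkcur, htdef, if_pos rfl]
          simp [lt_irrefl]
        · have hin : (i : ℕ) ≠ m := fun h => hi (Fin.ext (by simp [htdef, h]))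
          simp only [if_neg hi, hkcur]
          by_cases hlt : (i : ℕ) < m
          · rw [if_pos hlt, if_pos (by omega)]
          · rw [if_neg hlt, if_neg (by omega)]
      rw [hupd] at step
      have hih := ih (le_of_lt hms)
      calc Dlen p s (fun i => if (i : ℕ) < m + 1 then u i + 1 else u i)
          ≤ Dlen p s kcur + p ^ (s - 2) := step
        _ ≤ Dlen p s u + m * p ^ (s - 2) + p ^ (s - 2) := by omega
        _ = Dlen p s u + (m + 1) * p ^ (s - 2) := by ring
  have h1 := key s le_rfl
  have h2 : (fun i : Fin s => if (i : ℕ) < s then u i + 1 else u i) = fun i => u i + 1 := by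
    funext i
    rw [if_pos i.isLt]
  rw [h2] at h1
  have h3 : (Dlen p s (fun i => u i + 1) : ℤ) ≤ Dlen p s u + s * p ^ (s - 2) := by
    exact_mod_cast h1
  linarith
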